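/- Let T be a finite tree satisfying the path condition. Then there is no path v₁v₂…v_t in T with t ≥ 3 such that deg(v₁) > deg(v_i) and deg(v_t) > deg(v_i) for some interior index i ∈ {2, …, t−1}. -/

import Mathlib

open SimpleGraph

/-- Degree of a vertex. -/
noncomputable def deg {V : Type*} (G : SimpleGraph V) (v : V) : ℕ :=
  Nat.card (G.neighborSet v)

/-- Sombor index. -/
noncomputable def somborIndex {V : Type*} (G : SimpleGraph V) : ℝ :=
  ∑ᶠ e ∈ G.edgeSet,
    Sym2.lift ⟨fun u v => Real.sqrt ((deg G u : ℝ) ^ 2 + (deg G v : ℝ) ^ 2),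
      fun u v => by simp [add_comm]⟩ e

/-- Multiset of degrees of non-pendant vertices. -/
noncomputable def degSeq {V : Type*} [Fintype V] (G : SimpleGraph V) : Multiset ℕ :=
  ((Finset.univ : Finset V).filter (fun v => deg G v ≠ 1)).val.map (deg G)

def pathCondition {V : Type*} (G : SimpleGraph V) : Prop :=
  ∀ ⦃u v : V⦄ (p : G.Walk u v), p.IsPath → 3 ≤ p.length →
    deg G u < deg G v → deg G (p.getVert 1) ≤ deg G (p.getVert (p.length - 1))

def attachPendants {V : Type*} (G : SimpleGraph V) (v : V) (k : ℕ) :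
    SimpleGraph (V ⊕ Fin k) where
  Adj x y :=
    match x, y with
    | Sum.inl a, Sum.inl b => G.Adj a b
    | Sum.inl a, Sum.inr _ => a = v
    | Sum.inr _, Sum.inl b => b = v
    | Sum.inr _, Sum.inr _ => False
  symm := by
    constructor
    rintro (a | i) (b | j) h
    · exact h.symm
    · exact h
    · exact h
    · exact h.elim
  loopless := by
    constructor
    rintro (a | i) h
    · exact G.irrefl h
    · exact h

/-- Prefix of a walk: the first `n` edges. -/
private def wtake {V : Type*} {G : SimpleGraph V} :
    ∀ {u v : V} (p : G.Walk u v) (n : ℕ), G.Walk u (p.getVert n)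
  | _, _, .nil, _ => .nil
  | _, _, .cons _ _, 0 => .nil
  | _, _, .cons h q, (n+1) => .cons h (wtake q n)

private lemma wtake_length {V : Type*} {G : SimpleGraph V} :
    ∀ {u v : V} (p : G.Walk u v) (n : ℕ), n ≤ p.length → (wtake p n).length = n
  | _, _, .nil, n, hn => by
      simp only [SimpleGraph.Walk.length_nil, Nat.le_zero] at hn
      subst hn; rfl
  | _, _, .cons _ _, 0, _ => rfl
  | _, _, .cons h q, (n+1), hn => by
      show (Walk.cons h (wtake q n)).length = n + 1
      rw [Walk.length_cons, wtake_length q n (by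
        rw [Walk.length_cons] at hn; omega)]

private lemma wtake_getVert {V : Type*} {G : SimpleGraph V} :
    ∀ {u v : V} (p : G.Walk u v) (n j : ℕ), j ≤ n →
      (wtake p n).getVert j = p.getVert j
  | _, _, .nil, _, _, _ => rfl
  | _, _, .cons _ _, 0, j, hj => by
      obtain rfl : j = 0 := Nat.le_zero.mp hj
      rfl
  | _, _, .cons _ _, (_+1), 0, _ => rfl
  | _, _, .cons h q, (n+1), (j+1), hj => by
      show (wtake q n).getVert j = q.getVert j
      exact wtake_getVert q n j (by omega)

private lemma wtake_support_subset {V : Type*} {G : SimpleGraph V} :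
    ∀ {u v : V} (p : G.Walk u v) (n : ℕ), (wtake p n).support ⊆ p.support
  | _, _, .nil, _ => fun _ h => h
  | _, _, .cons h q, 0 => by
      show (Walk.nil).support ⊆ (Walk.cons h q).support
      simp [Walk.support_cons]
  | _, _, .cons h q, (n+1) => by
      show (Walk.cons h (wtake q n)).support ⊆ (Walk.cons h q).support
      rw [Walk.support_cons, Walk.support_cons]
      exact List.cons_subset_cons _ (wtake_support_subset q n)

private lemma isPath_wtake {V : Type*} {G : SimpleGraph V} :
    ∀ {u v : V} {p : G.Walk u v}, p.IsPath → ∀ n : ℕ, (wtake p n).IsPath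
  | _, _, .nil, _, _ => Walk.IsPath.nil
  | _, _, .cons h q, _, 0 => Walk.IsPath.nil
  | _, _, .cons h q, hp, (n+1) => by
      rw [Walk.cons_isPath_iff] at hp
      show (Walk.cons h (wtake q n)).IsPath
      rw [Walk.cons_isPath_iff]
      exact ⟨isPath_wtake hp.1 n, fun hm => hp.2 (wtake_support_subset q n hm)⟩

private lemma getVert_injective {V : Type*} {G : SimpleGraph V} :
    ∀ {u v : V} (p : G.Walk u v), p.IsPath → ∀ i j : ℕ, i ≤ p.length → j ≤ p.length →
      p.getVert i = p.getVert j → i = j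
  | _, _, .nil, _, i, j, hi, hj, _ => by
      simp only [SimpleGraph.Walk.length_nil, Nat.le_zero] at hi hj
      omega
  | _, _, .cons h q, _, 0, 0, _, _, _ => rfl
  | _, _, .cons h q, hp, 0, (j+1), _, hj, hij => by
      rw [Walk.cons_isPath_iff] at hp
      rw [Walk.getVert_cons_succ, Walk.getVert_zero] at hij
      rw [Walk.length_cons] at hj
      exact absurd (Walk.mem_support_iff_exists_getVert.2 ⟨j, hij.symm, by omega⟩) hp.2
  | _, _, .cons h q, hp, (i+1), 0, hi, _, hij => by
      rw [Walk.cons_isPath_iff] at hp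
      rw [Walk.getVert_cons_succ, Walk.getVert_zero] at hij
      rw [Walk.length_cons] at hi
      exact absurd (Walk.mem_support_iff_exists_getVert.2 ⟨i, hij, by omega⟩) hp.2
  | _, _, .cons h q, hp, (i+1), (j+1), hi, hj, hij => by
      rw [Walk.length_cons] at hi hj
      rw [Walk.getVert_cons_succ, Walk.getVert_cons_succ] at hij
      have := getVert_injective q (Walk.IsPath.of_cons hp) i j (by omega) (by omega) hij
      omega

/-- In a tree satisfying the path condition, there is no path `v₁…v_t` (`t ≥ 3`) with an
interior vertex `v_i` such that `deg v₁ > deg v_i` and `deg v_t > deg v_i`. -/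
theorem no_low_interior_vertex {V : Type*} [Fintype V] (T : SimpleGraph V) (hT : T.IsTree)
    (hpc : pathCondition T) :
    ¬ ∃ (u v : V) (p : T.Walk u v), p.IsPath ∧ 2 ≤ p.length ∧
      ∃ i : ℕ, 1 ≤ i ∧ i ≤ p.length - 1 ∧
        deg T (p.getVert i) < deg T u ∧ deg T (p.getVert i) < deg T v := by
  classical
  rintro ⟨u0, v0, p0, hp0, hl0, i0, h01, h02, h03, h04⟩
  set P : ℕ → Prop := fun n => ∃ (u v : V) (p : T.Walk u v), p.IsPath ∧ 2 ≤ p.length ∧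
      p.length = n ∧ ∃ i : ℕ, 1 ≤ i ∧ i ≤ p.length - 1 ∧
        deg T (p.getVert i) < deg T u ∧ deg T (p.getVert i) < deg T v with hPdef
  have hbound : ∀ n, P n → n ≤ Fintype.card V := by
    rintro n ⟨u, v, p, hp, -, rfl, -⟩
    exact hp.length_lt.le
  have h0 : P p0.length := ⟨u0, v0, p0, hp0, hl0, rfl, i0, h01, h02, h03, h04⟩
  set N := Nat.findGreatest P (Fintype.card V) with hNdef
  have hPN : P N := Nat.findGreatest_spec (hbound _ h0) h0
  obtain ⟨u, v, p, hp, hlen, hN, i, hi1, hi2, hiu, hiv⟩ := hPN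
  have hiL : i < p.length := by omega
  have degeq : ∀ x : V, deg T x = (T.neighborSet x).ncard := fun x =>
    Nat.card_coe_set_eq _
  -- the interior vertex has degree ≥ 2
  have hne : p.getVert (i-1) ≠ p.getVert (i+1) := by
    intro h
    have := getVert_injective p hp (i-1) (i+1) (by omega) (by omega) h
    omega
  have hadj1 : T.Adj (p.getVert i) (p.getVert (i-1)) := by
    have h := p.adj_getVert_succ (i := i-1) (by omega)
    rw [show i - 1 + 1 = i by omega] at h
    exact h.symm
  have hadj2 : T.Adj (p.getVert i) (p.getVert (i+1)) := p.adj_getVert_succ hiL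
  have hdi : 2 ≤ deg T (p.getVert i) := by
    rw [degeq]
    have hsub : ({p.getVert (i-1), p.getVert (i+1)} : Set V) ⊆
        T.neighborSet (p.getVert i) := by
      rintro x (rfl | rfl)
      · exact hadj1
      · exact hadj2
    calc 2 = ({p.getVert (i-1), p.getVert (i+1)} : Set V).ncard :=
          (Set.ncard_pair hne).symm
      _ ≤ _ := Set.ncard_le_ncard hsub (Set.toFinite _)
  -- find a neighbor w of u different from p.getVert 1
  have hex : ∃ w, T.Adj u w ∧ w ≠ p.getVert 1 := by
    by_contra hcon
    push_neg at hcon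
    have hsub : T.neighborSet u ⊆ {p.getVert 1} := fun x hx => hcon x hx
    have h1 := Set.ncard_le_ncard hsub (Set.toFinite _)
    rw [Set.ncard_singleton, ← degeq u] at h1
    omega
  obtain ⟨w, hadjw, hwne⟩ := hex
  -- w is not on the path (T is a tree)
  have hwsup : w ∉ p.support := by
    intro hw
    have hq2 : (Walk.cons hadjw Walk.nil).IsPath := by simp [hadjw.ne]
    have heq : p.takeUntil w hw = Walk.cons hadjw Walk.nil := by
      have := hT.IsAcyclic.path_unique ⟨p.takeUntil w hw, hp.takeUntil hw⟩
        ⟨Walk.cons hadjw Walk.nil, hq2⟩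
      exact congrArg Subtype.val this
    have hspec := p.take_spec hw
    rw [heq, Walk.cons_append, Walk.nil_append] at hspec
    have : p.getVert 1 = w := by
      conv_lhs => rw [← hspec]
      rw [Walk.getVert_cons_succ, Walk.getVert_zero]
    exact hwne this.symm
  -- the extended walk
  have hqpath : (Walk.cons hadjw.symm p).IsPath :=
    (Walk.cons_isPath_iff _ _).2 ⟨hp, hwsup⟩
  by_cases hwd : deg T (p.getVert i) < deg T w
  · -- longer counterexample, contradicting maximality
    have hq : P (p.length + 1) := by
      refine ⟨w, v, Walk.cons hadjw.symm p, hqpath, ?_, ?_, i+1, ?_, ?_, ?_, ?_⟩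
      · rw [Walk.length_cons]; omega
      · rw [Walk.length_cons]
      · omega
      · rw [Walk.length_cons]; omega
      · rw [Walk.getVert_cons_succ]; exact hwd
      · rw [Walk.getVert_cons_succ]; exact hiv
    have := Nat.le_findGreatest (hbound _ hq) hq
    omega
  push_neg at hwd
  -- downward induction: every vertex from position i to the end has degree ≥ min
  have key : ∀ d k, k ≤ p.length → p.length ≤ k + d → i ≤ k →
      min (deg T u) (deg T v) ≤ deg T (p.getVert k) := by
    intro d
    induction d with
    | zero =>
      intro k hk1 hk2 _
      have hk : k = p.length := by omega
      rw [hk, p.getVert_length]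
      exact min_le_right _ _
    | succ d ih =>
      intro k hk1 hk2 hk3
      rcases eq_or_lt_of_le hk1 with h | h
      · rw [h, p.getVert_length]
        exact min_le_right _ _
      · have hk1' : k + 1 ≤ p.length := h
        have ihk := ih (k+1) hk1' (by omega) (by omega)
        set r : T.Walk w (p.getVert (k+1)) := Walk.cons hadjw.symm (wtake p (k+1)) with hr
        have hrl : r.length = k + 2 := by
          rw [hr, Walk.length_cons, wtake_length p _ hk1']
        have hrpath : r.IsPath := by
          rw [hr, Walk.cons_isPath_iff]
          exact ⟨isPath_wtake hp _, fun hm => hwsup (wtake_support_subset p _ hm)⟩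
        have hdeg : deg T w < deg T (p.getVert (k+1)) :=
          lt_of_le_of_lt hwd (lt_of_lt_of_le (lt_min hiu hiv) ihk)
        have hpc' := hpc r hrpath (by omega) hdeg
        have e1 : r.getVert 1 = u := by
          rw [hr, Walk.getVert_cons_succ, Walk.getVert_zero]
        have e2 : r.getVert (r.length - 1) = p.getVert k := by
          have e : r.length - 1 = k + 1 := by omega
          rw [e, hr, Walk.getVert_cons_succ]
          exact wtake_getVert p (k+1) k (by omega)
        rw [e1, e2] at hpc'
        exact le_trans (min_le_left _ _) hpc'
  have hfin := key (p.length - i) i hiL.le (by omega) le_rfl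
  have := lt_of_lt_of_le (lt_min hiu hiv) hfin
  omega
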